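/- Let R = k[X,Z] be a polynomial ring over a field k and J = (X^2, X*Z^a, Z^c) with integers a ≥ 1, c ≥ 2, a ≤ ⌈c/2⌉. If the monomial X*Z^β lies in the integral closure of J and 1 ≤ β ≤ a−1, then β ≥ c (hence no such monomial exists, i.e., X*Z^β ∉ integral closure of J for 1 ≤ β ≤ a−1 when a−1 < c). -/
import Mathlib


/-- `r` is integral over the ideal `I`: it satisfies an equation
`r^m + a_1 r^(m-1) + ... + a_m = 0` with `a_j ∈ I^j`. -/
def IsIntegralOverIdeal {R : Type*} [CommRing R] (I : Ideal R) (r : R) : Prop :=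
  ∃ m : ℕ, 0 < m ∧ ∃ a : ℕ → R, (∀ j ∈ Finset.Icc 1 m, a j ∈ I ^ j) ∧
    r ^ m + ∑ j ∈ Finset.Icc 1 m, a j * r ^ (m - j) = 0

/-- An ideal is integrally closed if it contains every element integral over it. -/
def Ideal.IsIntClosed {R : Type*} [CommRing R] (I : Ideal R) : Prop :=
  ∀ r, IsIntegralOverIdeal I r → r ∈ I

section Aux
open MvPolynomial
variable {k : Type*} [Field k]


lemma coeff_mul_ne_zero {p q : MvPolynomial (Fin 2) k} {d : Fin 2 →₀ ℕ}
    (h : coeff d (p * q) ≠ 0) :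
    ∃ u v : Fin 2 →₀ ℕ, u + v = d ∧ coeff u p ≠ 0 ∧ coeff v q ≠ 0 := by
  rw [coeff_mul] at h
  obtain ⟨x, hx, hne⟩ := Finset.exists_ne_zero_of_sum_ne_zero h
  exact ⟨x.1, x.2, Finset.HasAntidiagonal.mem_antidiagonal.mp hx,
    left_ne_zero_of_mul hne, right_ne_zero_of_mul hne⟩

lemma coeff_span_mon {T : Set (Fin 2 →₀ ℕ)} {p : MvPolynomial (Fin 2) k}
    (hp : p ∈ Ideal.span ((fun μ => (monomial μ 1 : MvPolynomial (Fin 2) k)) '' T))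
    {d : Fin 2 →₀ ℕ} (hd : coeff d p ≠ 0) : ∃ μ ∈ T, μ ≤ d := by
  induction hp using Submodule.span_induction generalizing d with
  | mem x hx =>
      obtain ⟨μ, hμ, rfl⟩ := hx
      rw [coeff_monomial] at hd
      split_ifs at hd with h
      · exact ⟨μ, hμ, h ▸ le_refl _⟩
      · exact absurd rfl hd
  | zero => simp at hd
  | add x y hx hy ihx ihy =>
      rw [coeff_add] at hd
      rcases (by by_contra h; push_neg at h; simp [h.1, h.2] at hd :
        coeff d x ≠ 0 ∨ coeff d y ≠ 0) with h | h
      · exact ihx h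
      · exact ihy h
  | smul a x hx ih =>
      rw [smul_eq_mul] at hd
      obtain ⟨u, v, huv, _, hv⟩ := coeff_mul_ne_zero hd
      obtain ⟨μ, hμ, hle⟩ := ih hv
      exact ⟨μ, hμ, hle.trans (huv ▸ le_add_self)⟩

lemma span_pow_le (v1 v2 v3 : Fin 2 →₀ ℕ) (j : ℕ) :
    (Ideal.span ((fun μ => (monomial μ 1 : MvPolynomial (Fin 2) k)) '' {v1, v2, v3})) ^ j ≤
      Ideal.span ((fun μ => (monomial μ 1 : MvPolynomial (Fin 2) k)) ''
        {ν | ∃ n1 n2 n3 : ℕ, n1 + n2 + n3 = j ∧ ν = n1 • v1 + n2 • v2 + n3 • v3}) := by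
  induction j with
  | zero =>
      rw [pow_zero, Ideal.one_eq_top, top_le_iff, Ideal.eq_top_iff_one]
      refine Ideal.subset_span ⟨0, ⟨0, 0, 0, by simp, by simp⟩, ?_⟩
      simp
  | succ j ih =>
      rw [pow_succ]
      calc _ ≤ _ * _ := Ideal.mul_mono ih le_rfl
        _ = _ := Ideal.span_mul_span' _ _
        _ ≤ _ := ?_
      rw [Ideal.span_le]
      rintro z hz
      obtain ⟨x, ⟨μ, ⟨n1, n2, n3, hsum, rfl⟩, rfl⟩, y, ⟨ν, hν, rfl⟩, rfl⟩ := hz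
      simp only []
      rw [monomial_mul, one_mul]
      refine Ideal.subset_span ?_
      rcases hν with rfl | rfl | rfl
      · exact ⟨_, ⟨n1 + 1, n2, n3, by omega, by rw [add_smul, one_smul]; abel⟩, rfl⟩
      · exact ⟨_, ⟨n1, n2 + 1, n3, by omega, by rw [add_smul n2 1, one_smul]; abel⟩, rfl⟩
      · exact ⟨_, ⟨n1, n2, n3 + 1, by omega, by rw [add_smul n3 1, one_smul]; abel⟩, rfl⟩

lemma coeff_mul_ne_zero' {p q : MvPolynomial (Fin 2) k} {d : Fin 2 →₀ ℕ}
    (h : coeff d (p * q) ≠ 0) :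
    ∃ u v : Fin 2 →₀ ℕ, u + v = d ∧ coeff u p ≠ 0 ∧ coeff v q ≠ 0 := by
  rw [coeff_mul] at h
  obtain ⟨x, hx, hne⟩ := Finset.exists_ne_zero_of_sum_ne_zero h
  exact ⟨x.1, x.2, Finset.HasAntidiagonal.mem_antidiagonal.mp hx,
    left_ne_zero_of_mul hne, right_ne_zero_of_mul hne⟩

end Aux

open MvPolynomial in
theorem stmt_1 {k : Type*} [Field k] (a c β : ℕ) (ha : 1 ≤ a) (hc : 2 ≤ c)
    (hac : a ≤ (c + 1) / 2) (hβ1 : 1 ≤ β) (hβ2 : β ≤ a - 1)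
    (hint : IsIntegralOverIdeal
      (Ideal.span {(X 0 : MvPolynomial (Fin 2) k) ^ 2, X 0 * X 1 ^ a, X 1 ^ c})
      (X 0 * X 1 ^ β)) :
    c ≤ β := by
  obtain ⟨m, hm, A, hA, heq⟩ := hint
  exfalso
  set v1 : Fin 2 →₀ ℕ := Finsupp.single 0 2 with hv1
  set v2 : Fin 2 →₀ ℕ := Finsupp.single 0 1 + Finsupp.single 1 a with hv2
  set v3 : Fin 2 →₀ ℕ := Finsupp.single 1 c with hv3
  have hgen : ({(X 0 : MvPolynomial (Fin 2) k) ^ 2, X 0 * X 1 ^ a, X 1 ^ c} : Set _)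
      = (fun μ => (monomial μ 1 : MvPolynomial (Fin 2) k)) '' {v1, v2, v3} := by
    rw [Set.image_insert_eq, Set.image_insert_eq, Set.image_singleton]
    have hX : (X 0 : MvPolynomial (Fin 2) k) = monomial (Finsupp.single 0 1) 1 := by
      rw [← pow_one (X (0 : Fin 2)), X_pow_eq_monomial]
    congr 1
    · rw [X_pow_eq_monomial]
    congr 1
    · rw [hv2, hX, X_pow_eq_monomial, monomial_mul, one_mul]
    · rw [X_pow_eq_monomial]
  -- powers of r are monomials
  have hrm : ∀ t : ℕ, (X 0 * X 1 ^ β : MvPolynomial (Fin 2) k) ^ t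
      = monomial (Finsupp.single 0 t + Finsupp.single 1 (t * β)) 1 := by
    intro t
    have hr : (X 0 * X 1 ^ β : MvPolynomial (Fin 2) k)
        = monomial (Finsupp.single 0 1 + Finsupp.single 1 β) 1 := by
      rw [show (X 0 : MvPolynomial (Fin 2) k) = monomial (Finsupp.single 0 1) 1 by
            rw [← pow_one (X (0 : Fin 2)), X_pow_eq_monomial],
          X_pow_eq_monomial, monomial_mul, one_mul]
    rw [hr, monomial_pow, one_pow, smul_add, Finsupp.smul_single, Finsupp.smul_single,
      smul_eq_mul, smul_eq_mul, mul_one]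
  set D : Fin 2 →₀ ℕ := Finsupp.single 0 m + Finsupp.single 1 (m * β) with hD
  have h0 := congrArg (coeff D) heq
  rw [coeff_add, coeff_sum, hrm m, coeff_monomial, if_pos rfl, coeff_zero] at h0
  have hsne : ∑ j ∈ Finset.Icc 1 m, coeff D (A j * (X 0 * X 1 ^ β) ^ (m - j)) ≠ 0 := by
    intro h
    rw [h, add_zero] at h0
    exact one_ne_zero h0
  obtain ⟨j, hjmem, hjne⟩ := Finset.exists_ne_zero_of_sum_ne_zero hsne
  obtain ⟨hj1, hj2⟩ := Finset.mem_Icc.mp hjmem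
  obtain ⟨u, v, huv, hu, hv⟩ := coeff_mul_ne_zero' hjne
  rw [hrm (m - j), coeff_monomial] at hv
  split_ifs at hv with hveq
  swap
  · exact hv rfl
  -- compute u's coordinates
  have hu0 : u 0 = j := by
    have := congrArg (fun f : Fin 2 →₀ ℕ => f 0) huv
    subst hveq
    simp only [Finsupp.add_apply, hD, Finsupp.single_apply] at this
    norm_num at this
    omega
  have hu1 : u 1 = j * β := by
    have := congrArg (fun f : Fin 2 →₀ ℕ => f 1) huv
    subst hveq
    simp only [Finsupp.add_apply, hD, Finsupp.single_apply] at this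
    norm_num at this
    have hsplit : m * β = j * β + (m - j) * β := by
      rw [← add_mul]
      congr 1
      omega
    rw [hsplit] at this
    exact Nat.add_right_cancel this
  have hAj := hA j hjmem
  rw [hgen] at hAj
  have hAj' := span_pow_le (k := k) v1 v2 v3 j hAj
  obtain ⟨μ, ⟨n1, n2, n3, hsum, rfl⟩, hle⟩ := coeff_span_mon hAj' hu
  have g0 := Finsupp.le_def.mp hle 0
  have g1 := Finsupp.le_def.mp hle 1
  simp only [hv1, hv2, hv3, Finsupp.add_apply, Finsupp.smul_apply, Finsupp.single_apply,
    smul_eq_mul, hu0, hu1] at g0 g1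
  norm_num at g0 g1
  -- g0 : 2 * n1 + n2 ≤ j (roughly), g1 : n2 * a + n3 * c ≤ j * β
  obtain ⟨a, rfl⟩ : ∃ a', a = a' + 1 := ⟨a - 1, by omega⟩
  obtain ⟨c, rfl⟩ : ∃ c', c = c' + 2 := ⟨c - 2, by omega⟩
  have hβa : β ≤ a := by omega
  have t1 : j * β ≤ j * a := Nat.mul_le_mul_left j hβa
  have t2 : j * a ≤ (n2 + 2 * n3) * a := Nat.mul_le_mul_right _ (by omega)
  have t3 : n3 * (2 * a) ≤ n3 * (c + 1) := Nat.mul_le_mul_left _ (by omega)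
  nlinarith [g1, t1, t2, t3]
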